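/- arXiv:1811.10525 — 3 statements merged into one kernel-verified Lean document; each statement's English description precedes it below -/
import Mathlib

section
/- Cut-and-paste lemma for randomized protocol transcripts: let a : 𝒳 × T → ℝ≥0 and b : 𝒴 × T → ℝ≥0 be nonnegative functions on finite sets such that π^{x,y}(τ) := a(x,τ)·b(y,τ) is a probability distribution on T for every (x,y). Then for all x, x' ∈ 𝒳 and y, y' ∈ 𝒴: B(π^{x,y}, π^{x',y'}) = B(π^{x,y'}, π^{x',y}). -/
open Finset

/-- Fidelity `F(p,q) = Σ_τ √(p(τ)·q(τ))`. -/
noncomputable def fid {T : Type} [Fintype T] (p q : T → ℝ) : ℝ :=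
  ∑ τ, Real.sqrt (p τ * q τ)

/-- Bures metric `B(p,q) = √(1 − F(p,q))`. -/
noncomputable def bures {T : Type} [Fintype T] (p q : T → ℝ) : ℝ :=
  Real.sqrt (1 - fid p q)

/-- Cut-and-paste lemma for randomized protocol transcripts: if
`π^{x,y}(τ) = a(x,τ)·b(y,τ)` is a probability distribution on `T` for every `(x,y)`
(with `a`, `b` nonnegative), then `B(π^{x,y}, π^{x',y'}) = B(π^{x,y'}, π^{x',y})`. -/
theorem cut_and_paste {𝒳 𝒴 T : Type} [Fintype 𝒳] [Fintype 𝒴] [Fintype T]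
    (a : 𝒳 → T → ℝ) (b : 𝒴 → T → ℝ)
    (ha : ∀ x τ, 0 ≤ a x τ) (hb : ∀ y τ, 0 ≤ b y τ)
    (hdist : ∀ x y, ∑ τ, a x τ * b y τ = 1)
    (x x' : 𝒳) (y y' : 𝒴) :
    bures (fun τ => a x τ * b y τ) (fun τ => a x' τ * b y' τ)
      = bures (fun τ => a x τ * b y' τ) (fun τ => a x' τ * b y τ) := by
  unfold bures fid
  congr 2
  apply Finset.sum_congr rfl
  intro τ _
  congr 1
  ring
end

section
/- Pythagorean property for randomized protocol transcripts: let a : 𝒳 × T → ℝ≥0 and b : 𝒴 × T → ℝ≥0 be nonnegative functions on finite sets such that π^{x,y}(τ) := a(x,τ)·b(y,τ) is a probability distribution on T for every (x,y). Then for all x, x' ∈ 𝒳 and y, y' ∈ 𝒴: B²(π^{x,y'}, π^{x',y'}) + B²(π^{x,y}, π^{x',y}) ≤ 2 · B²(π^{x',y'}, π^{x,y}). -/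
open Finset

lemma sqrt_mul_le_half_add {u v : ℝ} (hu : 0 ≤ u) (hv : 0 ≤ v) :
    Real.sqrt (u * v) ≤ (u + v) / 2 := by
  rw [Real.sqrt_mul hu]
  nlinarith [sq_nonneg (Real.sqrt u - Real.sqrt v), Real.sq_sqrt hu, Real.sq_sqrt hv,
    Real.sqrt_nonneg u, Real.sqrt_nonneg v]

lemma fid_le_one {T : Type} [Fintype T] (p q : T → ℝ) (hp : ∀ τ, 0 ≤ p τ)
    (hq : ∀ τ, 0 ≤ q τ) (hps : ∑ τ, p τ = 1) (hqs : ∑ τ, q τ = 1) :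
    fid p q ≤ 1 := by
  have : fid p q ≤ ∑ τ, (p τ + q τ) / 2 :=
    Finset.sum_le_sum fun τ _ => sqrt_mul_le_half_add (hp τ) (hq τ)
  calc fid p q ≤ ∑ τ, (p τ + q τ) / 2 := this
    _ = 1 := by rw [← Finset.sum_div, Finset.sum_add_distrib, hps, hqs]; norm_num

/-- Pythagorean property for randomized protocol transcripts: if
`π^{x,y}(τ) = a(x,τ)·b(y,τ)` is a probability distribution on `T` for every `(x,y)`
(with `a`, `b` nonnegative), then
`B²(π^{x,y'}, π^{x',y'}) + B²(π^{x,y}, π^{x',y}) ≤ 2 · B²(π^{x',y'}, π^{x,y})`. -/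
theorem pythagorean_property {𝒳 𝒴 T : Type} [Fintype 𝒳] [Fintype 𝒴] [Fintype T]
    (a : 𝒳 → T → ℝ) (b : 𝒴 → T → ℝ)
    (ha : ∀ x τ, 0 ≤ a x τ) (hb : ∀ y τ, 0 ≤ b y τ)
    (hdist : ∀ x y, ∑ τ, a x τ * b y τ = 1)
    (x x' : 𝒳) (y y' : 𝒴) :
    bures (fun τ => a x τ * b y' τ) (fun τ => a x' τ * b y' τ) ^ 2
      + bures (fun τ => a x τ * b y τ) (fun τ => a x' τ * b y τ) ^ 2
      ≤ 2 * bures (fun τ => a x' τ * b y' τ) (fun τ => a x τ * b y τ) ^ 2 := by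
  have hpos : ∀ (x : 𝒳) (y : 𝒴) (τ : T), 0 ≤ a x τ * b y τ :=
    fun x y τ => mul_nonneg (ha x τ) (hb y τ)
  have h1 : fid (fun τ => a x τ * b y' τ) (fun τ => a x' τ * b y' τ) ≤ 1 :=
    fid_le_one _ _ (hpos x y') (hpos x' y') (hdist x y') (hdist x' y')
  have h2 : fid (fun τ => a x τ * b y τ) (fun τ => a x' τ * b y τ) ≤ 1 :=
    fid_le_one _ _ (hpos x y) (hpos x' y) (hdist x y) (hdist x' y)
  have h3 : fid (fun τ => a x' τ * b y' τ) (fun τ => a x τ * b y τ) ≤ 1 :=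
    fid_le_one _ _ (hpos x' y') (hpos x y) (hdist x' y') (hdist x y)
  have key : 2 * fid (fun τ => a x' τ * b y' τ) (fun τ => a x τ * b y τ)
      ≤ fid (fun τ => a x τ * b y' τ) (fun τ => a x' τ * b y' τ)
        + fid (fun τ => a x τ * b y τ) (fun τ => a x' τ * b y τ) := by
    unfold fid
    rw [Finset.mul_sum, ← Finset.sum_add_distrib]
    refine Finset.sum_le_sum fun τ _ => ?_
    have hA : (0:ℝ) ≤ a x τ * a x' τ := mul_nonneg (ha x τ) (ha x' τ)
    have e1 : a x' τ * b y' τ * (a x τ * b y τ)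
        = (a x τ * a x' τ) * (b y' τ * b y τ) := by ring
    have e2 : a x τ * b y' τ * (a x' τ * b y' τ)
        = (a x τ * a x' τ) * (b y' τ) ^ 2 := by ring
    have e3 : a x τ * b y τ * (a x' τ * b y τ)
        = (a x τ * a x' τ) * (b y τ) ^ 2 := by ring
    rw [e1, e2, e3, Real.sqrt_mul hA, Real.sqrt_mul hA, Real.sqrt_mul hA,
      Real.sqrt_sq (hb y' τ), Real.sqrt_sq (hb y τ)]
    have hle : Real.sqrt (b y' τ * b y τ) ≤ (b y' τ + b y τ) / 2 :=
      sqrt_mul_le_half_add (hb y' τ) (hb y τ)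
    nlinarith [Real.sqrt_nonneg (a x τ * a x' τ)]
  unfold bures
  rw [Real.sq_sqrt (by linarith), Real.sq_sqrt (by linarith), Real.sq_sqrt (by linarith)]
  linarith
end

section
/- Average encoding theorem (Holevo-quantity form): let X be a finite set, μ a probability distribution on X, and for each x ∈ X let ρ^x be an n×n complex density matrix; set ρ̄ = Σ_{x} μ(x)·ρ^x. Then Σ_{x} μ(x) · B²(ρ^x, ρ̄) ≤ S(ρ̄) − Σ_{x} μ(x)·S(ρ^x). (The right-hand side equals the quantum mutual information I(X : A) of the classical–quantum state Σ_x μ(x)|x⟩⟨x| ⊗ ρ^x.) -/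
open Matrix ComplexOrder

/-- Positive-semidefinite square root of a matrix, extended by `0` to arbitrary matrices. -/
noncomputable def matSqrt {n : ℕ} (A : Matrix (Fin n) (Fin n) ℂ) : Matrix (Fin n) (Fin n) ℂ :=
  open scoped Classical in
  if h : A.PosSemidef then (h.1.eigenvectorUnitary : Matrix (Fin n) (Fin n) ℂ) *
    diagonal ((↑) ∘ Real.sqrt ∘ h.1.eigenvalues) *
    (star h.1.eigenvectorUnitary : Matrix (Fin n) (Fin n) ℂ) else 0

/-- Fidelity `F(ρ,σ) = Tr √(√σ ρ √σ)`. -/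
noncomputable def fidQ {n : ℕ} (ρ σ : Matrix (Fin n) (Fin n) ℂ) : ℝ :=
  (matSqrt (matSqrt σ * ρ * matSqrt σ)).trace.re

/-- Bures metric `B(ρ,σ) = √(1 − F(ρ,σ))`. -/
noncomputable def buresQ {n : ℕ} (ρ σ : Matrix (Fin n) (Fin n) ℂ) : ℝ :=
  Real.sqrt (1 - fidQ ρ σ)

/-- Von Neumann entropy `S(ρ) = −Σ_i λ_i log₂ λ_i` (eigenvalues `λ_i` of `ρ`),
with the convention `0·log₂ 0 = 0`. -/
noncomputable def vnEnt {n : ℕ} (ρ : Matrix (Fin n) (Fin n) ℂ) : ℝ :=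
  open scoped Classical in
  if h : ρ.IsHermitian then -∑ i, h.eigenvalues i * Real.logb 2 (h.eigenvalues i) else 0

open scoped ComplexConjugate

variable {n : ℕ}

noncomputable def Matrix.PosSemidef.sqrt {A : Matrix (Fin n) (Fin n) ℂ} (h : A.PosSemidef) :
    Matrix (Fin n) (Fin n) ℂ :=
  (h.1.eigenvectorUnitary : Matrix (Fin n) (Fin n) ℂ) *
    diagonal ((↑) ∘ Real.sqrt ∘ h.1.eigenvalues) *
    (star h.1.eigenvectorUnitary : Matrix (Fin n) (Fin n) ℂ)

private lemma Matrix.PosSemidef.sqrt_herm {A : Matrix (Fin n) (Fin n) ℂ} (h : A.PosSemidef) :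
    h.sqrtᴴ = h.sqrt := by
  unfold Matrix.PosSemidef.sqrt
  rw [Matrix.conjTranspose_mul, Matrix.conjTranspose_mul, Matrix.diagonal_conjTranspose,
    ← Matrix.star_eq_conjTranspose, ← Matrix.star_eq_conjTranspose, star_star, Matrix.mul_assoc]
  congr 3
  funext i
  simp

private lemma Matrix.PosSemidef.sqrt_mul_self {A : Matrix (Fin n) (Fin n) ℂ} (h : A.PosSemidef) :
    h.sqrt * h.sqrt = A := by
  unfold Matrix.PosSemidef.sqrt
  have hU : (star h.1.eigenvectorUnitary : Matrix (Fin n) (Fin n) ℂ) *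
      (h.1.eigenvectorUnitary : Matrix (Fin n) (Fin n) ℂ) = 1 := Unitary.coe_star_mul_self _
  conv_rhs => rw [h.1.spectral_theorem, Unitary.conjStarAlgAut_apply]
  simp only [Matrix.mul_assoc]
  rw [← Matrix.mul_assoc (star _) _ (diagonal _ * star _), hU, Matrix.one_mul,
    ← Matrix.mul_assoc (diagonal _) (diagonal _), Matrix.diagonal_mul_diagonal]
  congr 3
  funext i
  simp only [Function.comp_apply]
  rw [← Complex.ofReal_mul, Real.mul_self_sqrt (h.eigenvalues_nonneg i)]
  rfl

private lemma Matrix.IsHermitian.star_mul_self_mul_eq_diagonal {A : Matrix (Fin n) (Fin n) ℂ}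
    (hA : A.IsHermitian) :
    star (hA.eigenvectorUnitary : Matrix (Fin n) (Fin n) ℂ) * A *
      (hA.eigenvectorUnitary : Matrix (Fin n) (Fin n) ℂ)
      = Matrix.diagonal (Complex.ofReal ∘ hA.eigenvalues) := by
  have hs := hA.spectral_theorem
  rw [Unitary.conjStarAlgAut_apply] at hs
  have := congrArg (fun M => star (hA.eigenvectorUnitary : Matrix (Fin n) (Fin n) ℂ) * M *
      (hA.eigenvectorUnitary : Matrix (Fin n) (Fin n) ℂ)) hs
  rw [this]
  have hU : (star hA.eigenvectorUnitary : Matrix (Fin n) (Fin n) ℂ) *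
      (hA.eigenvectorUnitary : Matrix (Fin n) (Fin n) ℂ) = 1 := Unitary.coe_star_mul_self _
  simp only [← Matrix.mul_assoc]
  rw [hU, Matrix.one_mul, Matrix.mul_assoc, hU, Matrix.mul_one]
  rfl

private lemma trace_unitary_diag (U : Matrix (Fin n) (Fin n) ℂ) (hU : star U * U = 1)
    (d : Fin n → ℂ) : (U * Matrix.diagonal d * star U).trace = ∑ i, d i := by
  rw [Matrix.trace_mul_cycle, hU, Matrix.one_mul, Matrix.trace_diagonal]

private lemma matSqrt_eq {A : Matrix (Fin n) (Fin n) ℂ} (hA : A.PosSemidef) :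
    matSqrt A = hA.sqrt := dif_pos hA

private lemma trace_matSqrt {M : Matrix (Fin n) (Fin n) ℂ} (hM : M.PosSemidef) :
    (matSqrt M).trace = ((∑ k, Real.sqrt (hM.1.eigenvalues k) : ℝ) : ℂ) := by
  rw [matSqrt_eq hM]
  unfold Matrix.PosSemidef.sqrt
  rw [trace_unitary_diag _ (Unitary.coe_star_mul_self _)]
  push_cast
  rfl

private lemma colsq (B : Matrix (Fin n) (Fin n) ℂ) (k : Fin n) :
    (Bᴴ * B) k k = ((∑ a, ‖B a k‖^2 : ℝ) : ℂ) := by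
  simp only [Matrix.mul_apply, Matrix.conjTranspose_apply]
  push_cast
  refine Finset.sum_congr rfl (fun a _ => ?_)
  rw [mul_comm, Complex.star_def, Complex.mul_conj']

private lemma re_trace_le_trace_sqrt (A : Matrix (Fin n) (Fin n) ℂ) :
    A.trace.re ≤ (matSqrt (Aᴴ * A)).trace.re := by
  rw [trace_matSqrt (posSemidef_conjTranspose_mul_self A), Complex.ofReal_re]
  set hM := posSemidef_conjTranspose_mul_self A with hMdef
  set W : Matrix (Fin n) (Fin n) ℂ := (hM.1.eigenvectorUnitary : Matrix (Fin n) (Fin n) ℂ) with hWdef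
  have hW1 : star W * W = 1 := Unitary.coe_star_mul_self _
  have hW2 : W * star W = 1 := Unitary.coe_mul_star_self _
  have hdiag : star W * (Aᴴ * A) * W = Matrix.diagonal (Complex.ofReal ∘ hM.1.eigenvalues) :=
    hM.1.star_mul_self_mul_eq_diagonal
  have ht : A.trace = (star W * (A * W)).trace := by
    rw [← Matrix.mul_assoc, Matrix.trace_mul_cycle, hW2, Matrix.one_mul]
  rw [ht, Matrix.trace]
  rw [Complex.re_sum]
  refine Finset.sum_le_sum (fun k _ => ?_)
  set B := A * W with hBdef
  have hBB : Bᴴ * B = Matrix.diagonal (Complex.ofReal ∘ hM.1.eigenvalues) := by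
    rw [hBdef, Matrix.conjTranspose_mul, Matrix.mul_assoc, ← Matrix.mul_assoc Aᴴ A W,
      ← Matrix.mul_assoc, ← Matrix.star_eq_conjTranspose W, hdiag]
  have hBcol : ∑ a, ‖B a k‖^2 = hM.1.eigenvalues k := by
    have := colsq B k
    rw [hBB] at this
    simp only [Matrix.diagonal_apply_eq, Function.comp_apply] at this
    exact_mod_cast this.symm
  have hWcol : ∑ a, ‖W a k‖^2 = 1 := by
    have := colsq W k
    rw [← Matrix.star_eq_conjTranspose W, hW1, Matrix.one_apply_eq] at this
    exact_mod_cast this.symm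
  have step1 : ((star W * B) k k).re ≤ ∑ a, ‖W a k‖ * ‖B a k‖ := by
    calc ((star W * B) k k).re ≤ ‖(star W * B) k k‖ := Complex.re_le_norm _
    _ ≤ ∑ a, ‖star W k a * B a k‖ := by rw [Matrix.mul_apply]; exact norm_sum_le _ _
    _ = ∑ a, ‖W a k‖ * ‖B a k‖ := by
        refine Finset.sum_congr rfl (fun a _ => ?_)
        rw [norm_mul, Matrix.star_apply, norm_star]
  calc ((star W * B) k k).re ≤ ∑ a, ‖W a k‖ * ‖B a k‖ := step1
  _ ≤ Real.sqrt (∑ a, ‖W a k‖^2) * Real.sqrt (∑ a, ‖B a k‖^2) :=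
      Real.sum_mul_le_sqrt_mul_sqrt _ _ _
  _ = Real.sqrt (hM.1.eigenvalues k) := by rw [hWcol, hBcol, Real.sqrt_one, one_mul]

private lemma fid_ge {ρ σ : Matrix (Fin n) (Fin n) ℂ} (hρ : ρ.PosSemidef) (hσ : σ.PosSemidef) :
    (hρ.sqrt * hσ.sqrt).trace.re ≤ fidQ ρ σ := by
  have hAM : (hρ.sqrt * hσ.sqrt)ᴴ * (hρ.sqrt * hσ.sqrt) = hσ.sqrt * ρ * hσ.sqrt := by
    rw [Matrix.conjTranspose_mul, hρ.sqrt_herm, hσ.sqrt_herm]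
    rw [Matrix.mul_assoc, ← Matrix.mul_assoc hρ.sqrt hρ.sqrt, hρ.sqrt_mul_self,
      ← Matrix.mul_assoc]
  unfold fidQ
  rw [matSqrt_eq hσ, ← hAM]
  exact re_trace_le_trace_sqrt _

private lemma trace_diag_mul_diag (E : Matrix (Fin n) (Fin n) ℂ) (d e : Fin n → ℂ) :
    (Matrix.diagonal d * E * Matrix.diagonal e * Eᴴ).trace
      = ∑ i, ∑ j, d i * e j * (E i j * conj (E i j)) := by
  simp [Matrix.trace, Matrix.diag, Matrix.mul_apply, Matrix.conjTranspose_apply,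
    Matrix.diagonal_apply, ite_mul, zero_mul, mul_ite, mul_zero,
    Finset.mul_sum, Finset.sum_mul, Finset.sum_ite_eq, Finset.sum_ite_eq']
  congr 1; ext i; congr 1; ext j; ring

private lemma trace_spec_spec (U V : Matrix (Fin n) (Fin n) ℂ) (a b : Fin n → ℝ) :
    ((U * Matrix.diagonal (Complex.ofReal ∘ a) * star U)
      * (V * Matrix.diagonal (Complex.ofReal ∘ b) * star V)).trace
    = ((∑ i, ∑ j, a i * b j * Complex.normSq ((star U * V) i j) : ℝ) : ℂ) := by
  set F := star U * V with hF
  set D := Matrix.diagonal (Complex.ofReal ∘ a) with hD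
  set E := Matrix.diagonal (Complex.ofReal ∘ b) with hE
  have h2 : star V * U = Fᴴ := by
    rw [hF, Matrix.conjTranspose_mul, Matrix.star_eq_conjTranspose U,
      Matrix.conjTranspose_conjTranspose, Matrix.star_eq_conjTranspose V]
  have h1 : (U * D * star U) * (V * E * star V) = U * (D * F * E * star V) := by
    simp only [hF, Matrix.mul_assoc]
  have h3 : (D * F * E * star V) * U = D * F * E * Fᴴ := by
    rw [Matrix.mul_assoc, h2]
  rw [h1, Matrix.trace_mul_comm, h3, hD, hE, trace_diag_mul_diag]
  push_cast
  refine Finset.sum_congr rfl (fun i _ => Finset.sum_congr rfl (fun j _ => ?_))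
  rw [Complex.mul_conj]
  simp only [Function.comp_apply]
  try push_cast
  try ring

private lemma conj_diag_entry (E : Matrix (Fin n) (Fin n) ℂ) (d : Fin n → ℂ) (j : Fin n) :
    (Eᴴ * Matrix.diagonal d * E) j j = ∑ i, d i * (E i j * conj (E i j)) := by
  simp [Matrix.mul_apply, Matrix.conjTranspose_apply, Matrix.diagonal_apply, ite_mul, zero_mul,
    mul_ite, mul_zero, Finset.mul_sum, Finset.sum_mul, Finset.sum_ite_eq, Finset.sum_ite_eq']
  refine Finset.sum_congr rfl (fun i _ => ?_); ring

private lemma conj_spec_entry (U V : Matrix (Fin n) (Fin n) ℂ) (a : Fin n → ℝ) (j : Fin n) :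
    (star V * (U * Matrix.diagonal (Complex.ofReal ∘ a) * star U) * V) j j
    = ((∑ i, a i * Complex.normSq ((star U * V) i j) : ℝ) : ℂ) := by
  set F := star U * V with hF
  have h2 : star V * U = Fᴴ := by
    rw [hF, Matrix.conjTranspose_mul, Matrix.star_eq_conjTranspose U,
      Matrix.conjTranspose_conjTranspose, Matrix.star_eq_conjTranspose V]
  have h1 : star V * (U * Matrix.diagonal (Complex.ofReal ∘ a) * star U) * V
      = Fᴴ * Matrix.diagonal (Complex.ofReal ∘ a) * F := by
    rw [← h2, hF]; simp only [Matrix.mul_assoc]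
  rw [h1, conj_diag_entry]
  push_cast
  refine Finset.sum_congr rfl (fun i _ => ?_)
  rw [Complex.mul_conj]
  simp only [Function.comp_apply]
  try push_cast
  try ring

private lemma trace_sqrt_sqrt {ρ σ : Matrix (Fin n) (Fin n) ℂ} (hρ : ρ.PosSemidef) (hσ : σ.PosSemidef) :
    (hρ.sqrt * hσ.sqrt).trace
      = ((∑ i, ∑ j, Real.sqrt (hρ.1.eigenvalues i) * Real.sqrt (hσ.1.eigenvalues j) *
          Complex.normSq ((star (hρ.1.eigenvectorUnitary : Matrix (Fin n) (Fin n) ℂ)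
            * (hσ.1.eigenvectorUnitary : Matrix (Fin n) (Fin n) ℂ)) i j) : ℝ) : ℂ) := by
  unfold Matrix.PosSemidef.sqrt
  exact trace_spec_spec _ _ (fun i => Real.sqrt (hρ.1.eigenvalues i))
    (fun j => Real.sqrt (hσ.1.eigenvalues j))

private lemma classical_bound {ι : Type*} [Fintype ι] (w t : ι → ℝ)
    (hw0 : ∀ i, 0 ≤ w i) (hw1 : ∑ i, w i = 1) (ht : ∀ i, 0 ≤ t i)
    (hpos : ∀ i, w i ≠ 0 → 0 < t i) :
    1 - ∑ i, w i * t i ≤ - ∑ i, w i * Real.log (t i) := by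
  set K := ∑ i, w i * Real.log (t i) with hK
  have h1 : Real.exp K ≤ ∑ i, w i * t i := by
    have hAM := Real.geom_mean_le_arith_mean_weighted Finset.univ w t
      (fun i _ => hw0 i) hw1 (fun i _ => ht i)
    calc Real.exp K = ∏ i, t i ^ (w i) := by
          rw [hK, Real.exp_sum]
          refine Finset.prod_congr rfl (fun i _ => ?_)
          by_cases h : w i = 0
          · simp [h]
          · rw [Real.rpow_def_of_pos (hpos i h), mul_comm]
      _ ≤ ∑ i, w i * t i := hAM
  have h2 : 1 + K ≤ Real.exp K := by
    have := Real.add_one_le_exp K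
    linarith
  linarith

private lemma rowsq (B : Matrix (Fin n) (Fin n) ℂ) (i : Fin n) :
    (B * Bᴴ) i i = ((∑ j, ‖B i j‖^2 : ℝ) : ℂ) := by
  simp only [Matrix.mul_apply, Matrix.conjTranspose_apply]
  push_cast
  refine Finset.sum_congr rfl (fun a _ => ?_)
  rw [Complex.star_def, Complex.mul_conj']

private lemma trace_eq_sum_eigen {A : Matrix (Fin n) (Fin n) ℂ} (hA : A.IsHermitian) :
    A.trace = ((∑ i, hA.eigenvalues i : ℝ) : ℂ) := by
  conv_lhs => rw [hA.spectral_theorem, Unitary.conjStarAlgAut_apply]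
  rw [trace_unitary_diag _ (Unitary.coe_star_mul_self _)]
  push_cast
  rfl

private lemma G_le_one (p q : Fin n → ℝ) (c : Fin n → Fin n → ℝ)
    (hp0 : ∀ i, 0 ≤ p i) (hq0 : ∀ j, 0 ≤ q j) (hc0 : ∀ i j, 0 ≤ c i j)
    (hrow : ∀ i, ∑ j, c i j = 1) (hcol : ∀ j, ∑ i, c i j = 1)
    (hpsum : ∑ i, p i = 1) (hqsum : ∑ j, q j = 1) :
    ∑ i, ∑ j, Real.sqrt (p i) * Real.sqrt (q j) * c i j ≤ 1 := by
  have hb : ∀ i j, Real.sqrt (p i) * Real.sqrt (q j) * c i j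
      ≤ (p i * c i j + q j * c i j) / 2 := by
    intro i j
    have h1 : Real.sqrt (p i) * Real.sqrt (q j) * c i j ≤ ((p i + q j) / 2) * c i j := by
      apply mul_le_mul_of_nonneg_right _ (hc0 i j)
      nlinarith [sq_nonneg (Real.sqrt (p i) - Real.sqrt (q j)), Real.sq_sqrt (hp0 i),
        Real.sq_sqrt (hq0 j), Real.sqrt_nonneg (p i), Real.sqrt_nonneg (q j)]
    have h2 : ((p i + q j) / 2) * c i j = (p i * c i j + q j * c i j) / 2 := by ring
    linarith
  have hmid : ∀ i, ∑ j, (p i * c i j + q j * c i j) / 2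
      = (∑ j, p i * c i j) / 2 + (∑ j, q j * c i j) / 2 := by
    intro i
    rw [Finset.sum_div, Finset.sum_div, ← Finset.sum_add_distrib]
    exact Finset.sum_congr rfl (fun j _ => by ring)
  have e1 : ∑ i, ∑ j, p i * c i j = 1 := by
    calc ∑ i, ∑ j, p i * c i j = ∑ i, p i * ∑ j, c i j :=
          Finset.sum_congr rfl (fun i _ => (Finset.mul_sum _ _ _).symm)
      _ = ∑ i, p i := Finset.sum_congr rfl (fun i _ => by rw [hrow i, mul_one])
      _ = 1 := hpsum
  have e2 : ∑ i, ∑ j, q j * c i j = 1 := by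
    rw [Finset.sum_comm]
    calc ∑ j, ∑ i, q j * c i j = ∑ j, q j * ∑ i, c i j :=
          Finset.sum_congr rfl (fun j _ => (Finset.mul_sum _ _ _).symm)
      _ = ∑ j, q j := Finset.sum_congr rfl (fun j _ => by rw [hcol j, mul_one])
      _ = 1 := hqsum
  calc ∑ i, ∑ j, Real.sqrt (p i) * Real.sqrt (q j) * c i j
      ≤ ∑ i, ∑ j, (p i * c i j + q j * c i j) / 2 :=
        Finset.sum_le_sum (fun i _ => Finset.sum_le_sum (fun j _ => hb i j))
    _ = (∑ i, ∑ j, p i * c i j) / 2 + (∑ i, ∑ j, q j * c i j) / 2 := by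
        rw [Finset.sum_congr rfl (fun i (_ : i ∈ Finset.univ) => hmid i),
          Finset.sum_add_distrib, ← Finset.sum_div, ← Finset.sum_div]
    _ = 1 := by rw [e1, e2]; norm_num

private lemma classical_bound2 (p q : Fin n → ℝ) (c : Fin n → Fin n → ℝ)
    (hp0 : ∀ i, 0 ≤ p i) (hq0 : ∀ j, 0 ≤ q j) (hc0 : ∀ i j, 0 ≤ c i j)
    (hrow : ∀ i, ∑ j, c i j = 1) (hpsum : ∑ i, p i = 1)
    (hsupp : ∀ i j, p i * c i j ≠ 0 → 0 < q j) :
    1 - ∑ i, ∑ j, Real.sqrt (p i) * Real.sqrt (q j) * c i j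
      ≤ ((∑ i, p i * Real.log (p i)) - ∑ j, (∑ i, p i * c i j) * Real.log (q j)) / 2 := by
  have hw0 : ∀ ij : Fin n × Fin n, 0 ≤ p ij.1 * c ij.1 ij.2 :=
    fun ij => mul_nonneg (hp0 _) (hc0 _ _)
  have hw1 : ∑ ij : Fin n × Fin n, p ij.1 * c ij.1 ij.2 = 1 := by
    rw [Fintype.sum_prod_type]
    calc ∑ i, ∑ j, p i * c i j = ∑ i, p i * ∑ j, c i j :=
          Finset.sum_congr rfl (fun i _ => (Finset.mul_sum _ _ _).symm)
      _ = ∑ i, p i := Finset.sum_congr rfl (fun i _ => by rw [hrow i, mul_one])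
      _ = 1 := hpsum
  have hPpos : ∀ (i j : Fin n), p i * c i j ≠ 0 → 0 < p i := by
    intro i j hwij
    rcases (hp0 i).lt_or_eq with h | h
    · exact h
    · exact absurd (by rw [← h, zero_mul] : p i * c i j = 0) hwij
  have ht0 : ∀ ij : Fin n × Fin n, 0 ≤ Real.sqrt (q ij.2) * (Real.sqrt (p ij.1))⁻¹ :=
    fun ij => mul_nonneg (Real.sqrt_nonneg _) (inv_nonneg.mpr (Real.sqrt_nonneg _))
  have htpos : ∀ ij : Fin n × Fin n, p ij.1 * c ij.1 ij.2 ≠ 0 →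
      0 < Real.sqrt (q ij.2) * (Real.sqrt (p ij.1))⁻¹ := by
    intro ij hwij
    have hQj := hsupp ij.1 ij.2 hwij
    have hPi := hPpos ij.1 ij.2 hwij
    positivity
  have hcb := classical_bound (fun ij : Fin n × Fin n => p ij.1 * c ij.1 ij.2)
    (fun ij : Fin n × Fin n => Real.sqrt (q ij.2) * (Real.sqrt (p ij.1))⁻¹)
    hw0 hw1 ht0 htpos
  have hwt : ∑ ij : Fin n × Fin n, (p ij.1 * c ij.1 ij.2)
        * (Real.sqrt (q ij.2) * (Real.sqrt (p ij.1))⁻¹)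
      = ∑ i, ∑ j, Real.sqrt (p i) * Real.sqrt (q j) * c i j := by
    rw [Fintype.sum_prod_type]
    refine Finset.sum_congr rfl (fun i _ => Finset.sum_congr rfl (fun j _ => ?_))
    by_cases hPi : p i = 0
    · simp [hPi]
    · rw [show p i * c i j * (Real.sqrt (q j) * (Real.sqrt (p i))⁻¹)
          = (p i / Real.sqrt (p i)) * Real.sqrt (q j) * c i j from by ring, Real.div_sqrt]
  have hlog : ∑ ij : Fin n × Fin n, (p ij.1 * c ij.1 ij.2)
        * Real.log (Real.sqrt (q ij.2) * (Real.sqrt (p ij.1))⁻¹)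
      = ((∑ j, (∑ i, p i * c i j) * Real.log (q j)) - ∑ i, p i * Real.log (p i)) / 2 := by
    have e1 : ∀ ij : Fin n × Fin n, (p ij.1 * c ij.1 ij.2)
          * Real.log (Real.sqrt (q ij.2) * (Real.sqrt (p ij.1))⁻¹)
        = ((p ij.1 * c ij.1 ij.2) * Real.log (q ij.2)
            - (p ij.1 * c ij.1 ij.2) * Real.log (p ij.1)) / 2 := by
      intro ij
      by_cases hwij : p ij.1 * c ij.1 ij.2 = 0
      · rw [hwij]; ring
      · have hQj := hsupp ij.1 ij.2 hwij
        have hPi := hPpos ij.1 ij.2 hwij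
        rw [Real.log_mul (by positivity) (by positivity), Real.log_inv,
          Real.log_sqrt (hq0 ij.2), Real.log_sqrt (hp0 ij.1)]
        ring
    rw [Finset.sum_congr rfl (fun ij _ => e1 ij), Fintype.sum_prod_type]
    have e2 : ∀ i, ∑ j, ((p i * c i j) * Real.log (q j)
          - (p i * c i j) * Real.log (p i)) / 2
        = ((∑ j, (p i * c i j) * Real.log (q j)) - p i * Real.log (p i)) / 2 := by
      intro i
      rw [← Finset.sum_div]
      congr 1
      rw [Finset.sum_sub_distrib]
      congr 1
      calc ∑ j, (p i * c i j) * Real.log (p i)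
          = (p i * Real.log (p i)) * ∑ j, c i j := by
            rw [Finset.mul_sum]
            exact Finset.sum_congr rfl (fun j _ => by ring)
        _ = p i * Real.log (p i) := by rw [hrow i, mul_one]
    rw [Finset.sum_congr rfl (fun i (_ : i ∈ Finset.univ) => e2 i), ← Finset.sum_div]
    congr 1
    rw [Finset.sum_sub_distrib]
    congr 1
    rw [Finset.sum_comm]
    exact Finset.sum_congr rfl (fun j _ => (Finset.sum_mul _ _ _).symm)
  rw [hwt, hlog] at hcb
  linarith

/-- Average encoding theorem (Holevo-quantity form): for a distribution `μ` on a finite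
set `X` and density matrices `ρ^x` with average `ρ̄ = Σ_x μ(x)·ρ^x`,
`Σ_x μ(x)·B²(ρ^x, ρ̄) ≤ S(ρ̄) − Σ_x μ(x)·S(ρ^x)`
(the right-hand side is the Holevo information `I(X:A)` of the cq-state). -/
theorem average_encoding {n : ℕ} {X : Type} [Fintype X]
    (μ : X → ℝ) (hμ0 : ∀ x, 0 ≤ μ x) (hμ1 : ∑ x, μ x = 1)
    (ρ : X → Matrix (Fin n) (Fin n) ℂ)
    (hρ : ∀ x, (ρ x).PosSemidef) (hρtr : ∀ x, (ρ x).trace = 1) :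
    ∑ x, μ x * buresQ (ρ x) (∑ x', (μ x' : ℂ) • ρ x') ^ 2
      ≤ vnEnt (∑ x', (μ x' : ℂ) • ρ x') - ∑ x, μ x * vnEnt (ρ x) := by
  classical
  rcases isEmpty_or_nonempty X with hX | hX
  · exfalso; simpa using hμ1
  set σm : Matrix (Fin n) (Fin n) ℂ := ∑ x', (μ x' : ℂ) • ρ x' with hσdef
  have hsm : ∀ x : X, ((μ x : ℂ) • ρ x).PosSemidef := by
    intro x
    exact (hρ x).smul (a := (μ x : ℂ)) (by exact_mod_cast hμ0 x)
  have hσpsd : σm.PosSemidef := by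
    rw [hσdef]
    exact Finset.sum_induction _ _ (fun a b ha hb => ha.add hb) Matrix.PosSemidef.zero
      (fun x _ => hsm x)
  have hσh : σm.IsHermitian := hσpsd.1
  set V : Matrix (Fin n) (Fin n) ℂ := (hσh.eigenvectorUnitary : Matrix (Fin n) (Fin n) ℂ) with hV
  set Q : Fin n → ℝ := hσh.eigenvalues with hQ
  set U : X → Matrix (Fin n) (Fin n) ℂ :=
    fun x => ((hρ x).1.eigenvectorUnitary : Matrix (Fin n) (Fin n) ℂ) with hU
  set P : X → Fin n → ℝ := fun x => (hρ x).1.eigenvalues with hP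
  set C : X → Fin n → Fin n → ℝ := fun x i j => Complex.normSq ((star (U x) * V) i j) with hC
  have hUU : ∀ x, U x * star (U x) = 1 := fun x => Unitary.coe_mul_star_self _
  have hUUs : ∀ x, star (U x) * U x = 1 := fun x => Unitary.coe_star_mul_self _
  have hVV : V * star V = 1 := Unitary.coe_mul_star_self _
  have hVVs : star V * V = 1 := Unitary.coe_star_mul_self _
  have hQ0 : ∀ j, 0 ≤ Q j := fun j => hσpsd.eigenvalues_nonneg j
  have hP0 : ∀ x i, 0 ≤ P x i := fun x i => (hρ x).eigenvalues_nonneg i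
  have hC0 : ∀ x i j, 0 ≤ C x i j := fun x i j => Complex.normSq_nonneg _
  have hPsum : ∀ x, ∑ i, P x i = 1 := by
    intro x
    have h := trace_eq_sum_eigen (hρ x).1
    rw [hρtr x] at h
    exact_mod_cast h.symm
  have hQsum : ∑ j, Q j = 1 := by
    have htr : σm.trace = 1 := by
      rw [hσdef, Matrix.trace_sum]
      simp only [Matrix.trace_smul, hρtr, smul_eq_mul, mul_one]
      exact_mod_cast hμ1
    have h := trace_eq_sum_eigen hσh
    rw [htr] at h
    exact_mod_cast h.symm
  -- the unitary overlap matrix is doubly stochastic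
  have hCnorm : ∀ x i j, C x i j = ‖(star (U x) * V) i j‖^2 := by
    intro x i j
    simp only [hC, ← Complex.sq_norm]
  have hEcol : ∀ x j, ∑ i, C x i j = 1 := by
    intro x j
    have hE : (star (U x) * V)ᴴ * (star (U x) * V) = 1 := by
      rw [← Matrix.star_eq_conjTranspose, Matrix.star_mul, star_star, Matrix.mul_assoc,
        ← Matrix.mul_assoc (U x), hUU x, Matrix.one_mul, hVVs]
    have h := colsq (star (U x) * V) j
    rw [hE, Matrix.one_apply_eq] at h
    have h2 : ∑ i, ‖(star (U x) * V) i j‖^2 = 1 := by exact_mod_cast h.symm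
    rw [← h2]
    exact Finset.sum_congr rfl (fun i _ => hCnorm x i j)
  have hErow : ∀ x i, ∑ j, C x i j = 1 := by
    intro x i
    have hE : (star (U x) * V) * (star (U x) * V)ᴴ = 1 := by
      rw [← Matrix.star_eq_conjTranspose, Matrix.star_mul, star_star, Matrix.mul_assoc,
        ← Matrix.mul_assoc V, hVV, Matrix.one_mul, hUUs x]
    have h := rowsq (star (U x) * V) i
    rw [hE, Matrix.one_apply_eq] at h
    have h2 : ∑ j, ‖(star (U x) * V) i j‖^2 = 1 := by exact_mod_cast h.symm
    rw [← h2]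
    exact Finset.sum_congr rfl (fun j _ => hCnorm x i j)
  -- R-identity: averaging recovers eigenvalues of σm
  have hRQ : ∀ j, ∑ x, μ x * (∑ i, P x i * C x i j) = Q j := by
    intro j
    have h1 : (star V * σm * V) j j = ((Q j : ℝ) : ℂ) := by
      have hd : star V * σm * V = Matrix.diagonal (Complex.ofReal ∘ Q) :=
        hσh.star_mul_self_mul_eq_diagonal
      rw [hd]
      simp [Matrix.diagonal_apply_eq]
    have h2 : (star V * σm * V) j j
        = ((∑ x, μ x * (∑ i, P x i * C x i j) : ℝ) : ℂ) := by
      calc (star V * σm * V) j j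
          = ∑ x, (μ x : ℂ) * ((star V * ρ x * V) j j) := by
            rw [hσdef, Matrix.mul_sum, Matrix.sum_mul, Matrix.sum_apply]
            refine Finset.sum_congr rfl (fun x _ => ?_)
            rw [Matrix.mul_smul, Matrix.smul_mul, Matrix.smul_apply, smul_eq_mul]
        _ = ∑ x, (μ x : ℂ) * ((∑ i, P x i * C x i j : ℝ) : ℂ) := by
            refine Finset.sum_congr rfl (fun x _ => ?_)
            congr 1
            conv_lhs => rw [(hρ x).1.spectral_theorem, Unitary.conjStarAlgAut_apply]
            exact conj_spec_entry (U x) V (P x) j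
        _ = _ := by push_cast; ring
    rw [h1] at h2
    exact_mod_cast h2.symm
  -- fidelity lower bound
  have hFid : ∀ x, ∑ i, ∑ j, Real.sqrt (P x i) * Real.sqrt (Q j) * C x i j
      ≤ fidQ (ρ x) σm := by
    intro x
    have h := fid_ge (hρ x) hσpsd
    rw [trace_sqrt_sqrt (hρ x) hσpsd] at h
    simpa using h
  -- G ≤ 1
  have hG1 : ∀ x, ∑ i, ∑ j, Real.sqrt (P x i) * Real.sqrt (Q j) * C x i j ≤ 1 :=
    fun x => G_le_one (P x) Q (C x) (hP0 x) hQ0 (hC0 x) (hErow x) (hEcol x) (hPsum x) hQsum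
  -- positivity of Q on the joint support
  have hQpos : ∀ x, 0 < μ x → ∀ i j, P x i * C x i j ≠ 0 → 0 < Q j := by
    intro x hμx i j hw
    have hwpos : 0 < P x i * C x i j :=
      lt_of_le_of_ne (mul_nonneg (hP0 x i) (hC0 x i j)) (Ne.symm hw)
    have hR : P x i * C x i j ≤ ∑ i', P x i' * C x i' j :=
      Finset.single_le_sum (fun i' _ => mul_nonneg (hP0 x i') (hC0 x i' j))
        (Finset.mem_univ i)
    have hterm : μ x * (∑ i', P x i' * C x i' j) ≤ Q j := by
      rw [← hRQ j]
      exact Finset.single_le_sum (fun x' _ => mul_nonneg (hμ0 x')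
        (Finset.sum_nonneg (fun i' _ => mul_nonneg (hP0 x' i') (hC0 x' i' j))))
        (Finset.mem_univ x)
    have : 0 < μ x * (∑ i', P x i' * C x i' j) :=
      mul_pos hμx (lt_of_lt_of_le hwpos hR)
    linarith
  -- entropy-type quantities
  set A : X → ℝ := fun x => ∑ i, P x i * Real.log (P x i) with hA
  set L : X → ℝ := fun x => ∑ j, (∑ i, P x i * C x i j) * Real.log (Q j) with hL
  -- key per-point inequality
  have hKx : ∀ x, 0 < μ x →
      1 - (∑ i, ∑ j, Real.sqrt (P x i) * Real.sqrt (Q j) * C x i j) ≤ (A x - L x) / 2 :=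
    fun x hμx => classical_bound2 (P x) Q (C x) (hP0 x) hQ0 (hC0 x) (hErow x) (hPsum x)
      (hQpos x hμx)
  -- per-point Bures bound
  have hBures : ∀ x, 0 < μ x → buresQ (ρ x) σm ^ 2 ≤ (A x - L x) / 2 := by
    intro x hμx
    have hG1x := hG1 x
    have hFx := hFid x
    have hKxx := hKx x hμx
    rcases le_or_gt (1 - fidQ (ρ x) σm) 0 with h | h
    · have hz : buresQ (ρ x) σm = 0 := by
        rw [buresQ]
        exact Real.sqrt_eq_zero_of_nonpos h
      rw [hz]
      nlinarith
    · rw [buresQ, Real.sq_sqrt h.le]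
      linarith
  -- nonnegativity of per-point (A x - L x)/2
  have hKnn : ∀ x, 0 < μ x → 0 ≤ (A x - L x) / 2 := by
    intro x hμx
    have := hKx x hμx
    have := hG1 x
    linarith
  -- sum the per-point bounds
  have hsum1 : ∑ x, μ x * buresQ (ρ x) σm ^ 2 ≤ ∑ x, μ x * ((A x - L x) / 2) := by
    refine Finset.sum_le_sum (fun x _ => ?_)
    rcases lt_or_eq_of_le (hμ0 x) with h | h
    · exact mul_le_mul_of_nonneg_left (hBures x h) (le_of_lt h)
    · rw [← h, zero_mul, zero_mul]
  -- identification of the sum with the Holevo quantity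
  set Chi : ℝ := (∑ x, μ x * A x) - ∑ j, Q j * Real.log (Q j) with hChi
  have e1 : ∑ x, μ x * L x = ∑ j, Q j * Real.log (Q j) := by
    have e2 : ∀ x, μ x * L x = ∑ j, (μ x * (∑ i, P x i * C x i j)) * Real.log (Q j) := by
      intro x
      rw [hL, Finset.mul_sum]
      exact Finset.sum_congr rfl (fun j _ => by ring)
    rw [Finset.sum_congr rfl (fun x (_ : x ∈ Finset.univ) => e2 x), Finset.sum_comm]
    refine Finset.sum_congr rfl (fun j _ => ?_)
    rw [← Finset.sum_mul, hRQ j]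
  have hSK : ∑ x, μ x * ((A x - L x) / 2) = Chi / 2 := by
    calc ∑ x, μ x * ((A x - L x) / 2) = ∑ x, (μ x * A x - μ x * L x) / 2 :=
          Finset.sum_congr rfl (fun x _ => by ring)
      _ = (∑ x, (μ x * A x - μ x * L x)) / 2 := by rw [← Finset.sum_div]
      _ = ((∑ x, μ x * A x) - ∑ x, μ x * L x) / 2 := by rw [Finset.sum_sub_distrib]
      _ = Chi / 2 := by rw [hChi, e1]
  -- rewrite the entropies
  have hEntσ : vnEnt σm = -((∑ j, Q j * Real.log (Q j)) / Real.log 2) := by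
    have h0 : vnEnt σm = -∑ j, Q j * Real.logb 2 (Q j) := dif_pos hσh
    rw [h0]
    simp only [Real.logb, ← mul_div_assoc]
    rw [← Finset.sum_div]
  have hEntρ : ∀ x, vnEnt (ρ x) = -(A x / Real.log 2) := by
    intro x
    have h0 : vnEnt (ρ x) = -∑ i, P x i * Real.logb 2 (P x i) := dif_pos (hρ x).1
    rw [h0, hA]
    simp only [Real.logb, ← mul_div_assoc]
    rw [← Finset.sum_div]
  have hRHS : vnEnt σm - ∑ x, μ x * vnEnt (ρ x) = Chi / Real.log 2 := by
    have e5 : ∑ x, μ x * vnEnt (ρ x) = -((∑ x, μ x * A x) / Real.log 2) := by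
      calc ∑ x, μ x * vnEnt (ρ x) = ∑ x, μ x * -(A x / Real.log 2) :=
            Finset.sum_congr rfl (fun x _ => by rw [hEntρ x])
        _ = ∑ x, -(μ x * A x) / Real.log 2 := Finset.sum_congr rfl (fun x _ => by ring)
        _ = (∑ x, -(μ x * A x)) / Real.log 2 := by rw [← Finset.sum_div]
        _ = -((∑ x, μ x * A x) / Real.log 2) := by rw [Finset.sum_neg_distrib, neg_div]
    rw [hEntσ, e5, hChi]
    ring
  -- final assembly
  have hLHS0 : 0 ≤ ∑ x, μ x * buresQ (ρ x) σm ^ 2 :=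
    Finset.sum_nonneg (fun x _ => mul_nonneg (hμ0 x) (sq_nonneg _))
  have hChi0 : 0 ≤ Chi := by
    have h1 : (0:ℝ) ≤ Chi / 2 := le_trans hLHS0 (by rw [← hSK]; exact hsum1)
    linarith
  have hlog2pos : (0:ℝ) < Real.log 2 := Real.log_pos (by norm_num)
  have hlog2le : Real.log 2 ≤ 2 := by
    have := Real.log_le_sub_one_of_pos (by norm_num : (0:ℝ) < 2)
    linarith
  rw [hRHS]
  calc ∑ x, μ x * buresQ (ρ x) σm ^ 2 ≤ ∑ x, μ x * ((A x - L x) / 2) := hsum1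
    _ = Chi / 2 := hSK
    _ ≤ Chi / Real.log 2 := div_le_div_of_nonneg_left hChi0 hlog2pos hlog2le
end
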